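/- arXiv:1006.2145 — 2 statements merged into one kernel-verified Lean document; each statement's English description precedes it below -/
import Mathlib

section
/- The map R̄_{α,β}: ((x₁,x₂),(y₁,y₂)) ↦ ((y₁ − (α−β)x₁/(1+x₁y₂), y₂), (x₁, x₂ + (α−β)y₂/(1+x₁y₂))) satisfies the parametric set-theoretic Yang–Baxter equation R̄²³_{β,γ} ∘ R̄¹³_{α,γ} ∘ R̄¹²_{α,β} = R̄¹²_{α,β} ∘ R̄¹³_{α,γ} ∘ R̄²³_{β,γ}. -/
set_option maxHeartbeats 2000000


/-- The Yang–Baxter map `R̄_{α,β}` on `ℂ² × ℂ²`. -/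
noncomputable def rbar (a b : ℂ) (p : (ℂ × ℂ) × (ℂ × ℂ)) : (ℂ × ℂ) × (ℂ × ℂ) :=
  ((p.2.1 - (a - b) * p.1.1 / (1 + p.1.1 * p.2.2), p.2.2),
   (p.1.1, p.1.2 + (a - b) * p.2.2 / (1 + p.1.1 * p.2.2)))

/-- The denominator of `R̄` at a point of `ℂ² × ℂ²`. -/
def rden (p : (ℂ × ℂ) × (ℂ × ℂ)) : ℂ := 1 + p.1.1 * p.2.2

/-- Action on the factors 1,2 of `(ℂ²)³`. -/
noncomputable def act12 (f : (ℂ × ℂ) × (ℂ × ℂ) → (ℂ × ℂ) × (ℂ × ℂ)) :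
    (ℂ × ℂ) × (ℂ × ℂ) × (ℂ × ℂ) → (ℂ × ℂ) × (ℂ × ℂ) × (ℂ × ℂ) :=
  fun p => ((f (p.1, p.2.1)).1, (f (p.1, p.2.1)).2, p.2.2)

/-- Action on the factors 1,3 of `(ℂ²)³`. -/
noncomputable def act13 (f : (ℂ × ℂ) × (ℂ × ℂ) → (ℂ × ℂ) × (ℂ × ℂ)) :
    (ℂ × ℂ) × (ℂ × ℂ) × (ℂ × ℂ) → (ℂ × ℂ) × (ℂ × ℂ) × (ℂ × ℂ) :=
  fun p => ((f (p.1, p.2.2)).1, p.2.1, (f (p.1, p.2.2)).2)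

/-- Action on the factors 2,3 of `(ℂ²)³`. -/
noncomputable def act23 (f : (ℂ × ℂ) × (ℂ × ℂ) → (ℂ × ℂ) × (ℂ × ℂ)) :
    (ℂ × ℂ) × (ℂ × ℂ) × (ℂ × ℂ) → (ℂ × ℂ) × (ℂ × ℂ) × (ℂ × ℂ) :=
  fun p => (p.1, f p.2)

theorem ybL1 {y n d : ℂ} (hd : d ≠ 0) : y - n / d = (y * d - n) / d := by
  field_simp
theorem ybL2 {n d z : ℂ} (hd : d ≠ 0) : 1 + n / d * z = (d + n * z) / d := by
  field_simp
theorem ybL3 {y k d e : ℂ} (hd : d ≠ 0) (he : e ≠ 0) : y + k / (e / d) = (y * e + k * d) / e := by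
  field_simp
theorem ybL4 {x n d : ℂ} (hd : d ≠ 0) : 1 + x * (n / d) = (d + x * n) / d := by
  field_simp
theorem ybL5 {y k d e : ℂ} (hd : d ≠ 0) (he : e ≠ 0) : y - k / (e / d) = (y * e - k * d) / e := by
  field_simp
theorem ybL6 {y k d : ℂ} (hd : d ≠ 0) : y + k / d = (y * d + k) / d := by
  field_simp

/-- `R̄` satisfies the parametric set-theoretic Yang–Baxter equation on the
domain where all the denominators appearing in both compositions are nonzero. -/
theorem stmt10 (a b c : ℂ) (p : (ℂ × ℂ) × (ℂ × ℂ) × (ℂ × ℂ))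
    (h1 : rden (p.1, p.2.1) ≠ 0)
    (h2 : rden ((act12 (rbar a b) p).1, (act12 (rbar a b) p).2.2) ≠ 0)
    (h3 : rden ((act13 (rbar a c) (act12 (rbar a b) p)).2.1,
                (act13 (rbar a c) (act12 (rbar a b) p)).2.2) ≠ 0)
    (h4 : rden (p.2.1, p.2.2) ≠ 0)
    (h5 : rden ((act23 (rbar b c) p).1, (act23 (rbar b c) p).2.2) ≠ 0)
    (h6 : rden ((act13 (rbar a c) (act23 (rbar b c) p)).1,
                (act13 (rbar a c) (act23 (rbar b c) p)).2.1) ≠ 0) :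
    act23 (rbar b c) (act13 (rbar a c) (act12 (rbar a b) p)) =
      act12 (rbar a b) (act13 (rbar a c) (act23 (rbar b c) p)) := by
  obtain ⟨⟨x1,x2⟩,⟨y1,y2⟩,⟨z1,z2⟩⟩ := p
  simp only [rbar, rden, act12, act13, act23] at *
  have r1 : y1 - (a - b) * x1 / (1 + x1 * y2) = (y1 * (1 + x1 * y2) - (a - b) * x1) / (1 + x1 * y2) := ybL1 h1
  have r2 : 1 + (y1 * (1 + x1 * y2) - (a - b) * x1) / (1 + x1 * y2) * z2 =
      (1 + x1 * y2 + (y1 * (1 + x1 * y2) - (a - b) * x1) * z2) / (1 + x1 * y2) := ybL2 h1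
  simp only [r1, r2] at h2 h3 ⊢
  have n2 : 1 + x1 * y2 + (y1 * (1 + x1 * y2) - (a - b) * x1) * z2 ≠ 0 := by
    intro h; apply h2; rw [h, zero_div]
  have r3 : y2 + (a - c) * z2 / ((1 + x1 * y2 + (y1 * (1 + x1 * y2) - (a - b) * x1) * z2) / (1 + x1 * y2)) =
      (y2 * (1 + x1 * y2 + (y1 * (1 + x1 * y2) - (a - b) * x1) * z2) + (a - c) * z2 * (1 + x1 * y2)) /
        (1 + x1 * y2 + (y1 * (1 + x1 * y2) - (a - b) * x1) * z2) := ybL3 h1 n2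
  have r4 : 1 + x1 * ((y2 * (1 + x1 * y2 + (y1 * (1 + x1 * y2) - (a - b) * x1) * z2) + (a - c) * z2 * (1 + x1 * y2)) /
        (1 + x1 * y2 + (y1 * (1 + x1 * y2) - (a - b) * x1) * z2)) =
      (1 + x1 * y2 + (y1 * (1 + x1 * y2) - (a - b) * x1) * z2 + x1 * (y2 * (1 + x1 * y2 + (y1 * (1 + x1 * y2) - (a - b) * x1) * z2) + (a - c) * z2 * (1 + x1 * y2))) /
        (1 + x1 * y2 + (y1 * (1 + x1 * y2) - (a - b) * x1) * z2) := ybL4 n2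
  simp only [r3, r4] at h3 ⊢
  have n3 : 1 + x1 * y2 + (y1 * (1 + x1 * y2) - (a - b) * x1) * z2 + x1 * (y2 * (1 + x1 * y2 + (y1 * (1 + x1 * y2) - (a - b) * x1) * z2) + (a - c) * z2 * (1 + x1 * y2)) ≠ 0 := by
    intro h; apply h3; rw [h, zero_div]
  have r5 : y2 + (b - c) * z2 / (1 + y1 * z2) = (y2 * (1 + y1 * z2) + (b - c) * z2) / (1 + y1 * z2) := ybL6 h4
  have r6 : 1 + x1 * ((y2 * (1 + y1 * z2) + (b - c) * z2) / (1 + y1 * z2)) =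
      (1 + y1 * z2 + x1 * (y2 * (1 + y1 * z2) + (b - c) * z2)) / (1 + y1 * z2) := ybL4 h4
  simp only [r5, r6] at h5 h6 ⊢
  have n5 : 1 + y1 * z2 + x1 * (y2 * (1 + y1 * z2) + (b - c) * z2) ≠ 0 := by
    intro h; apply h5; rw [h, zero_div]
  have r7 : y1 - (a - c) * x1 / ((1 + y1 * z2 + x1 * (y2 * (1 + y1 * z2) + (b - c) * z2)) / (1 + y1 * z2)) =
      (y1 * (1 + y1 * z2 + x1 * (y2 * (1 + y1 * z2) + (b - c) * z2)) - (a - c) * x1 * (1 + y1 * z2)) /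
        (1 + y1 * z2 + x1 * (y2 * (1 + y1 * z2) + (b - c) * z2)) := ybL5 h4 n5
  have r8 : 1 + (y1 * (1 + y1 * z2 + x1 * (y2 * (1 + y1 * z2) + (b - c) * z2)) - (a - c) * x1 * (1 + y1 * z2)) /
        (1 + y1 * z2 + x1 * (y2 * (1 + y1 * z2) + (b - c) * z2)) * z2 =
      (1 + y1 * z2 + x1 * (y2 * (1 + y1 * z2) + (b - c) * z2) + (y1 * (1 + y1 * z2 + x1 * (y2 * (1 + y1 * z2) + (b - c) * z2)) - (a - c) * x1 * (1 + y1 * z2)) * z2) /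
        (1 + y1 * z2 + x1 * (y2 * (1 + y1 * z2) + (b - c) * z2)) := ybL2 n5
  simp only [r7, r8] at h6 ⊢
  have n6 : 1 + y1 * z2 + x1 * (y2 * (1 + y1 * z2) + (b - c) * z2) + (y1 * (1 + y1 * z2 + x1 * (y2 * (1 + y1 * z2) + (b - c) * z2)) - (a - c) * x1 * (1 + y1 * z2)) * z2 ≠ 0 := by
    intro h; apply h6; rw [h, zero_div]
  clear r1 r2 r3 r4 r5 r6 r7 r8 h2 h3 h5 h6
  generalize eN3 : 1 + x1 * y2 + (y1 * (1 + x1 * y2) - (a - b) * x1) * z2 + x1 * (y2 * (1 + x1 * y2 + (y1 * (1 + x1 * y2) - (a - b) * x1) * z2) + (a - c) * z2 * (1 + x1 * y2)) = N3 at *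
  generalize eN2 : 1 + x1 * y2 + (y1 * (1 + x1 * y2) - (a - b) * x1) * z2 = N2 at *
  generalize eD1 : 1 + x1 * y2 = D1 at *
  generalize eN6 : 1 + y1 * z2 + x1 * (y2 * (1 + y1 * z2) + (b - c) * z2) + (y1 * (1 + y1 * z2 + x1 * (y2 * (1 + y1 * z2) + (b - c) * z2)) - (a - c) * x1 * (1 + y1 * z2)) * z2 = N6 at *
  generalize eN5 : 1 + y1 * z2 + x1 * (y2 * (1 + y1 * z2) + (b - c) * z2) = N5 at *
  generalize eD4 : 1 + y1 * z2 = D4 at *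
  refine Prod.ext ?_ (Prod.ext ?_ ?_) <;> simp only [Prod.mk.injEq] <;>
    refine ⟨?_, ?_⟩ <;> (try trivial) <;> field_simp <;> subst eD4 eN5 eN6 eD1 eN2 eN3 <;> ring
end

section
/- Define the map S_{α,β}: ((x₁,x₂),(y₁,y₂)) ↦ ((u₁,u₂),(v₁,v₂)) where v₁ = x₂ + y₁, v₂ = x₁/x₂ − (α + β(x₂y₂ − x₁))/(x₂(x₂y₂ − x₁ − β + 1)), u₁ = y₂y₁ − x₁y₁/x₂ + (α + β(x₂y₂ − x₁))(x₂ + y₁)/(x₂(x₂y₂ − x₁ − β + 1)), u₂ = −(α(x₂+y₁)² + (βx₂ + y₁y₂x₂ − x₁y₁ + y₁)(x₂(β + y₁y₂ − 1) − x₁y₁))/(x₂(x₂y₂ − x₁ − β + 1)). Then with L₁(x₁,x₂;α,ζ) = [[x₁ − ζ, x₂],[−(α+(x₁−1)x₁)/x₂, 1−x₁−ζ]] and L₂(x₁,x₂;β,ζ) = [[x₁x₂+β−ζ, x₁],[x₂, 1]], one has L₁(u₁,u₂;α,ζ)L₂(v₁,v₂;β,ζ) = L₂(y₁,y₂;β,ζ)L₁(x₁,x₂;α,ζ)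 for all ζ. -/
set_option maxHeartbeats 4000000

open Matrix

/-- The Lax matrix `L₁(x₁,x₂;α,ζ)`. -/
noncomputable def L1mat (x₁ x₂ a ζ : ℂ) : Matrix (Fin 2) (Fin 2) ℂ :=
  !![x₁ - ζ, x₂; -(a + (x₁ - 1) * x₁) / x₂, 1 - x₁ - ζ]

/-- The Lax matrix `L₂(x₁,x₂;β,ζ)`. -/
def L2mat (x₁ x₂ b ζ : ℂ) : Matrix (Fin 2) (Fin 2) ℂ :=
  !![x₁ * x₂ + b - ζ, x₁; x₂, 1]

theorem stmt11 (a b x₁ x₂ y₁ y₂ : ℂ) (hx₂ : x₂ ≠ 0)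
    (hden : x₂ * y₂ - x₁ - b + 1 ≠ 0)
    (hu₂ : -(a * (x₂ + y₁) ^ 2 +
        (b * x₂ + y₁ * y₂ * x₂ - x₁ * y₁ + y₁) *
          (x₂ * (b + y₁ * y₂ - 1) - x₁ * y₁)) /
        (x₂ * (x₂ * y₂ - x₁ - b + 1)) ≠ 0) :
    ∀ ζ : ℂ,
      L1mat
        (y₂ * y₁ - x₁ * y₁ / x₂ +
          (a + b * (x₂ * y₂ - x₁)) * (x₂ + y₁) / (x₂ * (x₂ * y₂ - x₁ - b + 1)))
        (-(a * (x₂ + y₁) ^ 2 +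
            (b * x₂ + y₁ * y₂ * x₂ - x₁ * y₁ + y₁) *
              (x₂ * (b + y₁ * y₂ - 1) - x₁ * y₁)) /
          (x₂ * (x₂ * y₂ - x₁ - b + 1))) a ζ *
      L2mat (x₂ + y₁)
        (x₁ / x₂ - (a + b * (x₂ * y₂ - x₁)) / (x₂ * (x₂ * y₂ - x₁ - b + 1))) b ζ =
      L2mat y₁ y₂ b ζ * L1mat x₁ x₂ a ζ := by
  intro ζ
  have hden' : y₂ * x₂ - x₁ - b + 1 ≠ 0 := by
    rw [mul_comm]; exact hden
  have hcu :
      -(a + ((y₂ * y₁ - x₁ * y₁ / x₂ +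
        (a + b * (x₂ * y₂ - x₁)) * (x₂ + y₁) / (x₂ * (x₂ * y₂ - x₁ - b + 1))) - 1) *
        (y₂ * y₁ - x₁ * y₁ / x₂ +
        (a + b * (x₂ * y₂ - x₁)) * (x₂ + y₁) / (x₂ * (x₂ * y₂ - x₁ - b + 1)))) /
      (-(a * (x₂ + y₁) ^ 2 + (b * x₂ + y₁ * y₂ * x₂ - x₁ * y₁ + y₁) *
          (x₂ * (b + y₁ * y₂ - 1) - x₁ * y₁)) / (x₂ * (x₂ * y₂ - x₁ - b + 1)))
      = y₂ - (x₁ / x₂ - (a + b * (x₂ * y₂ - x₁)) / (x₂ * (x₂ * y₂ - x₁ - b + 1))) := by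
    rw [div_eq_iff hu₂]
    field_simp
    ring
  have hd : x₂ * (x₂ * y₂ - x₁ - b + 1) ≠ 0 := mul_ne_zero hx₂ hden
  have h2 : (x₂ * (x₂ * y₂ - x₁ - b + 1)) ^ 2 ≠ 0 := pow_ne_zero _ hd
  unfold L1mat L2mat
  ext i j
  fin_cases i <;> fin_cases j <;>
    simp only [Matrix.mul_apply, Fin.sum_univ_two, Matrix.cons_val', Matrix.cons_val_zero,
      Matrix.cons_val_one, Matrix.head_cons, Matrix.head_fin_const, Matrix.empty_val',
      Matrix.cons_val_fin_one, Matrix.of_apply, Fin.mk_zero, Fin.mk_one]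
  · apply mul_right_cancel₀ h2
    field_simp
    ring
  · field_simp
    ring
  · rw [hcu]
    apply mul_right_cancel₀ h2
    field_simp
    ring
  · rw [hcu]
    field_simp
    ring
end
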